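/- arXiv:1712.03098 — 3 statements merged into one kernel-verified Lean document; each statement's English description precedes it below -/
import Mathlib

section
/- Let {S_ℓ}_{ℓ≥1} be a positive nondecreasing sequence, {b_ℓ}_{ℓ≥1} and {k_ℓ}_{ℓ≥1} nonnegative sequences, and p > 1 a constant. Define a_ℓ := ∏_{s=1}^{ℓ-1} 1/(1+b_s) for ℓ ≥ 2 (and a_1 := 1). If S_{ℓ+1} - S_ℓ ≤ b_ℓ S_ℓ + k_ℓ S_ℓ^p for all ℓ ≥ 1, and S_1^{1-p} + (1-p) ∑_{s=1}^{ℓ-1} k_s a_{s+1}^{1-p} > 0 for all ℓ ≥ 2, then S_ℓ ≤ (1/a_ℓ) · (S_1^{1-p} + (1-p) ∑_{s=1}^{ℓ-1} k_s a_{s+1}^{1-p})^{1/(1-p)} for all ℓ ≥ 2. -/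
/-- Bernoulli's inequality for nonpositive real exponents. -/
lemma bern_neg {t q : ℝ} (ht : 0 < t) (hq : q ≤ 0) : 1 + q * (t - 1) ≤ t ^ q := by
  rw [Real.rpow_def_of_pos ht]
  have h1 : q * Real.log t + 1 ≤ Real.exp (Real.log t * q) := by
    rw [mul_comm]; exact Real.add_one_le_exp _
  have h2 : Real.log t ≤ t - 1 := Real.log_le_sub_one_of_pos ht
  have h3 : q * (t - 1) ≤ q * Real.log t := mul_le_mul_of_nonpos_left h2 hq
  linarith

/-- A nonlinear discrete Gronwall-type inequality (Lemma 2.4). -/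
theorem nonlinear_discrete_gronwall (S b k : ℕ → ℝ) (p : ℝ) (hp : 1 < p)
    (hSpos : ∀ ℓ ≥ 1, 0 < S ℓ) (hSmono : ∀ ℓ ≥ 1, S ℓ ≤ S (ℓ + 1))
    (hb : ∀ ℓ ≥ 1, 0 ≤ b ℓ) (hk : ∀ ℓ ≥ 1, 0 ≤ k ℓ)
    (a : ℕ → ℝ) (ha : ∀ ℓ ≥ 2, a ℓ = ∏ s ∈ Finset.Icc 1 (ℓ - 1), (1 + b s)⁻¹)
    (hrec : ∀ ℓ ≥ 1, S (ℓ + 1) - S ℓ ≤ b ℓ * S ℓ + k ℓ * S ℓ ^ p)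
    (hpos : ∀ ℓ ≥ 2,
      0 < S 1 ^ (1 - p) + (1 - p) * ∑ s ∈ Finset.Icc 1 (ℓ - 1), k s * a (s + 1) ^ (1 - p)) :
    ∀ ℓ ≥ 2, S ℓ ≤ (1 / a ℓ) *
      (S 1 ^ (1 - p) + (1 - p) * ∑ s ∈ Finset.Icc 1 (ℓ - 1), k s * a (s + 1) ^ (1 - p))
        ^ (1 / (1 - p)) := by
  set q : ℝ := 1 - p with hqdef
  have hq : q < 0 := by simp only [hqdef]; linarith
  set A : ℕ → ℝ := fun ℓ => ∏ s ∈ Finset.Icc 1 (ℓ - 1), (1 + b s)⁻¹ with hAdef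
  have hApos : ∀ ℓ, 0 < A ℓ := by
    intro ℓ
    refine Finset.prod_pos fun s hs => inv_pos.2 ?_
    have := hb s (Finset.mem_Icc.1 hs).1; linarith
  have haA : ∀ ℓ ≥ 2, a ℓ = A ℓ := fun ℓ hℓ => ha ℓ hℓ
  have hArec : ∀ ℓ ≥ 1, A (ℓ + 1) = A ℓ * (1 + b ℓ)⁻¹ := by
    intro ℓ hℓ
    have h1 : ℓ + 1 - 1 = (ℓ - 1) + 1 := by omega
    have h2 : ℓ - 1 + 1 = ℓ := by omega
    simp only [hAdef, h1]
    rw [Finset.prod_Icc_succ_top (by omega), h2]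
  have hAmono : ∀ ℓ ≥ 1, A (ℓ + 1) ≤ A ℓ := by
    intro ℓ hℓ
    rw [hArec ℓ hℓ]
    have hb1 : (0:ℝ) ≤ b ℓ := hb ℓ hℓ
    have : (1 + b ℓ)⁻¹ ≤ 1 := by
      rw [inv_le_one_iff₀]; right; linarith
    nth_rewrite 2 [← mul_one (A ℓ)]
    exact mul_le_mul_of_nonneg_left this (hApos ℓ).le
  have hsum : ∀ ℓ, ∑ s ∈ Finset.Icc 1 (ℓ - 1), k s * a (s + 1) ^ q
      = ∑ s ∈ Finset.Icc 1 (ℓ - 1), k s * A (s + 1) ^ q := by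
    intro ℓ
    refine Finset.sum_congr rfl fun s hs => ?_
    rw [haA (s + 1) (by have := (Finset.mem_Icc.1 hs).1; omega)]
  -- key induction
  have key : ∀ ℓ ≥ 1,
      S 1 ^ q + q * ∑ s ∈ Finset.Icc 1 (ℓ - 1), k s * A (s + 1) ^ q ≤ (A ℓ * S ℓ) ^ q := by
    intro ℓ hℓ
    induction ℓ with
    | zero => omega
    | succ n ih =>
      rcases Nat.eq_or_lt_of_le hℓ with h1 | h1
      · -- base case n + 1 = 1
        have hn : n = 0 := by omega
        subst hn
        have hA1 : A 1 = 1 := by simp [hAdef]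
        simp [hA1]
      · have hn1 : 1 ≤ n := by omega
        have ihn := ih hn1
        have hSn := hSpos n hn1
        have hSn1 := hSpos (n + 1) (by omega)
        have hAn := hApos n
        have hAn1 := hApos (n + 1)
        set x : ℝ := A n * S n with hxdef
        set y : ℝ := A (n + 1) * S (n + 1) with hydef
        have hx : 0 < x := mul_pos hAn hSn
        have hy : 0 < y := mul_pos hAn1 hSn1
        -- step 1 : y ≤ x + k n * A (n+1) * S n ^ p
        have step1 : y ≤ x + k n * A (n + 1) * S n ^ p := by
          have hr := hrec n hn1
          have hbn : (0:ℝ) < 1 + b n := by have := hb n hn1; linarith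
          have hAe : A (n + 1) * (1 + b n) = A n := by
            rw [hArec n hn1]; field_simp
          have h2 : S (n + 1) ≤ (1 + b n) * S n + k n * S n ^ p := by linarith
          calc y = A (n + 1) * S (n + 1) := rfl
            _ ≤ A (n + 1) * ((1 + b n) * S n + k n * S n ^ p) :=
                mul_le_mul_of_nonneg_left h2 hAn1.le
            _ = A (n + 1) * (1 + b n) * S n + k n * A (n + 1) * S n ^ p := by ring
            _ = x + k n * A (n + 1) * S n ^ p := by rw [hAe]
        -- step 2 (Bernoulli, tangent at x) : x ^ q + q * x ^ (q - 1) * (y - x) ≤ y ^ q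
        have hxq : 0 < x ^ q := Real.rpow_pos_of_pos hx q
        have hxq1 : 0 < x ^ (q - 1) := Real.rpow_pos_of_pos hx _
        have step2 : x ^ q + q * x ^ (q - 1) * (y - x) ≤ y ^ q := by
          have hber := bern_neg (t := y / x) (q := q) (div_pos hy hx) hq.le
          rw [Real.div_rpow hy.le hx.le, le_div_iff₀ hxq] at hber
          have h4 : (1 + q * (y / x - 1)) * x ^ q = x ^ q + q * (x ^ q / x) * (y - x) := by
            field_simp
          have h5 : x ^ q / x = x ^ (q - 1) := by rw [Real.rpow_sub_one hx.ne']
          rw [h4, h5] at hber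
          exact hber
        have hfac : q * x ^ (q - 1) ≤ 0 := mul_nonpos_of_nonpos_of_nonneg hq.le hxq1.le
        -- step 3
        have step3 : q * x ^ (q - 1) * (k n * A (n + 1) * S n ^ p) ≤
            q * x ^ (q - 1) * (y - x) := by
          have h6 : y - x ≤ k n * A (n + 1) * S n ^ p := by linarith
          exact mul_le_mul_of_nonpos_left h6 hfac
        -- step 4
        have step4 : q * (k n * A (n + 1) ^ q) ≤
            q * x ^ (q - 1) * (k n * A (n + 1) * S n ^ p) := by
          have hcore : x ^ (q - 1) * (A (n + 1) * S n ^ p) ≤ A (n + 1) ^ q := by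
            have hx1 : x ^ (q - 1) = A n ^ (q - 1) * S n ^ (q - 1) :=
              Real.mul_rpow hAn.le hSn.le
            have hScancel : S n ^ (q - 1) * S n ^ p = 1 := by
              rw [← Real.rpow_add hSn]
              have : q - 1 + p = 0 := by rw [hqdef]; ring
              rw [this, Real.rpow_zero]
            have hAle : A n ^ (q - 1) ≤ A (n + 1) ^ (q - 1) :=
              Real.rpow_le_rpow_of_nonpos hAn1 (hAmono n hn1) (by linarith)
            have hAq : A (n + 1) ^ (q - 1) * A (n + 1) = A (n + 1) ^ q := by
              nth_rewrite 2 [← Real.rpow_one (A (n + 1))]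
              rw [← Real.rpow_add hAn1]
              ring_nf
            calc x ^ (q - 1) * (A (n + 1) * S n ^ p)
                = (A n ^ (q - 1) * A (n + 1)) * (S n ^ (q - 1) * S n ^ p) := by
                  rw [hx1]; ring
              _ = A n ^ (q - 1) * A (n + 1) := by rw [hScancel, mul_one]
              _ ≤ A (n + 1) ^ (q - 1) * A (n + 1) := by
                  exact mul_le_mul_of_nonneg_right hAle hAn1.le
              _ = A (n + 1) ^ q := hAq
          have hqk : q * k n ≤ 0 := mul_nonpos_of_nonpos_of_nonneg hq.le (hk n hn1)
          have h7 := mul_le_mul_of_nonpos_left hcore hqk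
          calc q * (k n * A (n + 1) ^ q) = q * k n * A (n + 1) ^ q := by ring
            _ ≤ q * k n * (x ^ (q - 1) * (A (n + 1) * S n ^ p)) := h7
            _ = q * x ^ (q - 1) * (k n * A (n + 1) * S n ^ p) := by ring
        have hstep : x ^ q + q * (k n * A (n + 1) ^ q) ≤ y ^ q := by linarith
        -- sum identity
        have hsum2 : ∑ s ∈ Finset.Icc 1 (n + 1 - 1), k s * A (s + 1) ^ q
            = (∑ s ∈ Finset.Icc 1 (n - 1), k s * A (s + 1) ^ q) + k n * A (n + 1) ^ q := by
          have h1 : n + 1 - 1 = (n - 1) + 1 := by omega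
          have h2 : n - 1 + 1 = n := by omega
          rw [h1, Finset.sum_Icc_succ_top (by omega), h2]
        rw [hsum2, mul_add]
        linarith
  -- conclusion
  intro ℓ hℓ
  have hℓ1 : 1 ≤ ℓ := by omega
  have hE := hpos ℓ hℓ
  rw [hsum ℓ] at hE
  have hkeyℓ := key ℓ hℓ1
  have hxpos : 0 < A ℓ * S ℓ := mul_pos (hApos ℓ) (hSpos ℓ hℓ1)
  set E : ℝ := S 1 ^ q + q * ∑ s ∈ Finset.Icc 1 (ℓ - 1), k s * A (s + 1) ^ q with hEdef
  have h8 : ((A ℓ * S ℓ) ^ q) ^ (1 / q) ≤ E ^ (1 / q) :=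
    Real.rpow_le_rpow_of_nonpos hE hkeyℓ (by
      rw [one_div]
      exact (inv_nonpos.2 hq.le))
  have h9 : ((A ℓ * S ℓ) ^ q) ^ (1 / q) = A ℓ * S ℓ := by
    rw [← Real.rpow_mul hxpos.le, mul_one_div_cancel hq.ne, Real.rpow_one]
  rw [h9] at h8
  rw [haA ℓ hℓ, hsum ℓ]
  calc S ℓ = (1 / A ℓ) * (A ℓ * S ℓ) := by
        field_simp
        rw [eq_div_iff (hApos ℓ).ne']
    _ ≤ (1 / A ℓ) * E ^ (1 / q) := by
        have hA := hApos ℓ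
        exact mul_le_mul_of_nonneg_left h8 (by positivity)
end

section
/- Let a : V × V → ℝ be a symmetric bilinear form on a real vector space V, F : ℝ → ℝ continuously differentiable, and ε, k > 0. For a sequence u^0, u^1, …, u^M in V ∩ L^2(Ω) satisfying, for every test function v, ((u^{m+1} - u^m)/k, v) + a((u^{m+1} + u^m)/2, v) + (1/ε^2)((F(u^{m+1}) - F(u^m))/(u^{m+1} - u^m), v) = 0, the choice v = (u^{m+1} - u^m)/k yields the discrete energy law: (1/2) a(u^{m+1}, u^{m+1}) + (1/ε^2) ∫ F(u^{m+1}) ≤ (1/2) a(u^m, u^m) + (1/ε^2) ∫ F(u^m) for every m, i.e., the discrete energy J^h_ε(u^m) := (1/2) a(u^m, u^m) + ε^{-2} ∫ F(u^m) is nonincreasing in m. -/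
open MeasureTheory

/-- Unconditional energy stability of the modified Crank–Nicolson scheme:
testing with the discrete time derivative yields a nonincreasing discrete energy. -/
theorem discrete_energy_stability {Ω : Type*} [MeasureSpace Ω]
    (a : (Ω → ℝ) →ₗ[ℝ] (Ω → ℝ) →ₗ[ℝ] ℝ) (hsymm : ∀ v w : Ω → ℝ, a v w = a w v)
    (F : ℝ → ℝ) (hF : ContDiff ℝ 1 F) (ε k : ℝ) (hε : 0 < ε) (hk : 0 < k)
    (M : ℕ) (u : ℕ → Ω → ℝ) (hL2 : ∀ m ≤ M, MemLp (u m) 2 volume)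
    (hFInt : ∀ m ≤ M, Integrable (fun x => F (u m x)))
    (hscheme : ∀ m < M, ∀ v : Ω → ℝ,
      (∫ x, (u (m + 1) x - u m x) / k * v x)
        + a (fun x => (u (m + 1) x + u m x) / 2) v
        + (1 / ε^2) * ∫ x, (F (u (m + 1) x) - F (u m x)) / (u (m + 1) x - u m x) * v x
        = 0) :
    ∀ m < M,
      (1/2) * a (u (m + 1)) (u (m + 1)) + (1 / ε^2) * ∫ x, F (u (m + 1) x)
        ≤ (1/2) * a (u m) (u m) + (1 / ε^2) * ∫ x, F (u m x) := by
  intro m hm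
  have h := hscheme m hm (fun x => u (m + 1) x - u m x)
  have hT1 : 0 ≤ ∫ x, (u (m + 1) x - u m x) / k * (u (m + 1) x - u m x) := by
    apply integral_nonneg
    intro x
    simp only [Pi.zero_apply]
    have hx : (u (m + 1) x - u m x) / k * (u (m + 1) x - u m x)
        = (u (m + 1) x - u m x) ^ 2 / k := by ring
    rw [hx]; positivity
  have hfun : (fun x => (u (m + 1) x + u m x) / 2) = (2 : ℝ)⁻¹ • (u (m + 1) + u m) := by
    funext x; simp [Pi.smul_apply, Pi.add_apply]; ring
  have hv : (fun x => u (m + 1) x - u m x) = u (m + 1) - u m := rfl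
  have hT2 : a (fun x => (u (m + 1) x + u m x) / 2) (fun x => u (m + 1) x - u m x)
      = (1/2) * (a (u (m + 1)) (u (m + 1)) - a (u m) (u m)) := by
    rw [hfun, hv]
    simp only [LinearMap.map_add, LinearMap.map_sub, LinearMap.map_smul, LinearMap.add_apply,
      LinearMap.sub_apply, LinearMap.smul_apply, smul_eq_mul]
    rw [hsymm (u m) (u (m + 1))]
    ring
  have hT3 : (∫ x, (F (u (m + 1) x) - F (u m x)) / (u (m + 1) x - u m x)
        * (u (m + 1) x - u m x))
      = (∫ x, F (u (m + 1) x)) - ∫ x, F (u m x) := by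
    have heq : (fun x => (F (u (m + 1) x) - F (u m x)) / (u (m + 1) x - u m x)
        * (u (m + 1) x - u m x)) = fun x => F (u (m + 1) x) - F (u m x) := by
      funext x
      by_cases hx : u (m + 1) x - u m x = 0
      · rw [sub_eq_zero] at hx
        simp [hx]
      · exact div_mul_cancel₀ _ hx
    rw [heq, integral_sub (hFInt _ hm) (hFInt _ hm.le)]
  rw [hT2, hT3] at h
  have hε2 : 0 < 1 / ε ^ 2 := by positivity
  nlinarith [hT1, h]
end

section
/- Let f(u) = u^3 - u. For real numbers A, B with |A| ≤ C₀ and |B| ≤ C₀, and for any real x, y, define l := (1/4)(x+y)(A+B)^2 + (1/2)[x A^2 + y B^2] - (x+y)/2. Then l · ((x+y)/2) ≥ (3B^2 - 1)·((x+y)/2)^2 - (3/2)(C₀+1)|A - B| · ((x+y)/2)^2 - |A - B|·C₀·(x^2+y^2). -/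
/-- Estimate for the linear-in-ξ term in the error analysis. -/
theorem linear_term_estimate (C₀ A B x y : ℝ) (hA : |A| ≤ C₀) (hB : |B| ≤ C₀) :
    ((1/4) * (x + y) * (A + B)^2 + (1/2) * (x * A^2 + y * B^2) - (x + y)/2) * ((x + y)/2)
      ≥ (3*B^2 - 1) * ((x + y)/2)^2 - (3/2) * (C₀ + 1) * |A - B| * ((x + y)/2)^2
        - |A - B| * C₀ * (x^2 + y^2) := by
  have hC : 0 ≤ C₀ := le_trans (abs_nonneg A) hA
  set m : ℝ := (x + y)/2 with hm
  set d : ℝ := A - B with hdd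
  set K : ℝ := m * (m * (A + 3*B)) + m * (x * (A + B)) with hK
  have hd0 : 0 ≤ |d| := abs_nonneg d
  -- identity
  have hid : ((1/4) * (x + y) * (A + B)^2 + (1/2) * (x * A^2 + y * B^2) - m) * m
      = (3*B^2 - 1) * m^2 + (d/2) * K := by
    simp only [hm, hdd, hK]; ring
  clear_value m d K
  -- bound |K|
  have h1 : |A + 3*B| ≤ 4*C₀ := by
    have := abs_add_le A (3*B)
    have h3B : |3*B| = 3 * |B| := by
      rw [abs_mul]; norm_num
    linarith
  have h2 : |A + B| ≤ 2*C₀ := by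
    have := abs_add_le A B; linarith
  have h3 : |K| ≤ |m| * |m| * |A + 3*B| + |m| * |x| * |A + B| := by
    calc |K| = |m * (m * (A + 3*B)) + m * (x * (A + B))| := by rw [hK]
    _ ≤ |m * (m * (A + 3*B))| + |m * (x * (A + B))| := abs_add_le _ _
    _ = |m| * |m| * |A + 3*B| + |m| * |x| * |A + B| := by
        rw [abs_mul, abs_mul, abs_mul, abs_mul]; ring
  have e1 : |m| * |m| = m^2 := by rw [← sq_abs m]; ring
  have e2 : |m| * |x| = |m*x| := (abs_mul m x).symm
  have t1 : m^2 * |A + 3*B| ≤ m^2*(4*C₀) := mul_le_mul_of_nonneg_left h1 (sq_nonneg m)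
  have t2 : |m*x| * |A + B| ≤ |m*x| * (2*C₀) := mul_le_mul_of_nonneg_left h2 (abs_nonneg _)
  have hKb : |K| ≤ 4*C₀*m^2 + 2*C₀ * |m*x| := by
    have e1' : |m| * |m| * |A + 3*B| = m^2 * |A + 3*B| := by rw [e1]
    have e2' : |m| * |x| * |A + B| = |m*x| * |A + B| := by rw [e2]
    linarith
  -- elementary quadratic bounds
  have hmx : |m*x| ≤ (m^2 + x^2)/2 := by
    have h4 := two_mul_le_add_sq |m| |x|
    rw [sq_abs, sq_abs] at h4
    rw [abs_mul]; linarith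
  have hm2 : m^2 ≤ (x^2 + y^2)/2 := by
    rw [hm]; nlinarith [sq_nonneg (x - y)]
  -- combine, all linearly
  have hstep : |K| ≤ 3 * (C₀ + 1) * m^2 + 2 * C₀ * (x^2 + y^2) := by
    have p1 := mul_le_mul_of_nonneg_left hmx hC
    have p2 := mul_le_mul_of_nonneg_left hm2 hC
    have p3 := sq_nonneg m
    nlinarith [hKb, p1, p2, p3]
  have hfin : |d|/2 * |K| ≤ (3/2) * (C₀ + 1) * |d| * m^2 + |d| * C₀ * (x^2 + y^2) := by
    have hd2 : (0:ℝ) ≤ |d|/2 := by linarith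
    have p4 := mul_le_mul_of_nonneg_left hstep hd2
    have e3 : |d|/2 * (3 * (C₀ + 1) * m^2 + 2 * C₀ * (x^2 + y^2))
        = (3/2) * (C₀ + 1) * |d| * m^2 + |d| * C₀ * (x^2 + y^2) := by ring
    linarith
  have hdk : (d/2) * K ≥ -(|d|/2 * |K|) := by
    have habs : |(d/2) * K| = |d|/2 * |K| := by
      rw [abs_mul, abs_div]; simp
    have := neg_abs_le ((d/2) * K)
    linarith
  rw [hid]
  linarith
end
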